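/- Let α, β, γ be positive irrational numbers with α + β + γ = 1 and β/γ irrational. Define b̃(n) = ⌊⌊n(1-α)/β⌋ / (1-α)⌋ and c̃(n) = ⌊⌊n(1-α)/γ⌋ / (1-α)⌋. Then the sets B_α, {b̃(n) : n ≥ 1}, and {c̃(n) : n ≥ 1} form a partition of the positive integers. -/

import Mathlib

open scoped Classical
open scoped symmDiff

def beatty (α : ℝ) : Set ℤ := {m | ∃ n : ℕ, 0 < n ∧ m = ⌊(n : ℝ) / α⌋}

noncomputable def countLe (S : Set ℤ) (m : ℤ) : ℕ :=
  ((Finset.Icc 1 m).filter (fun k => k ∈ S)).card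

noncomputable def iterBeatty (α θ : ℝ) (n : ℕ) : ℤ :=
  ⌊(⌊(n : ℝ) * (1 - α) / θ⌋ : ℝ) / (1 - α)⌋

lemma beatty_eq_beattySeq (θ : ℝ) (hθ : 0 < θ) :
    beatty θ = {x | ∃ k > 0, beattySeq (1/θ) k = x} := by
  ext m
  constructor
  · rintro ⟨n, hn, rfl⟩
    exact ⟨n, by exact_mod_cast hn, by rw [beattySeq, mul_one_div]; norm_cast⟩
  · rintro ⟨k, hk, rfl⟩
    refine ⟨k.toNat, by omega, ?_⟩
    rw [beattySeq, mul_one_div]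
    have : ((k.toNat : ℕ) : ℝ) = (k : ℝ) := by exact_mod_cast Int.toNat_of_nonneg hk.le
    rw [this]

lemma floor_mul_strictMono {t : ℝ} (ht : 1 < t) {k k' : ℤ} (h : k < k') :
    ⌊(k : ℝ) * t⌋ < ⌊(k' : ℝ) * t⌋ := by
  have hk : (k : ℝ) + 1 ≤ (k' : ℝ) := by exact_mod_cast h
  have h1 : (k : ℝ) * t + 1 ≤ (k' : ℝ) * t := by nlinarith
  have h2 : ⌊(k : ℝ) * t⌋ + 1 = ⌊(k : ℝ) * t + 1⌋ := by
    rw [Int.floor_add_one]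
  have h3 : ⌊(k : ℝ) * t + 1⌋ ≤ ⌊(k' : ℝ) * t⌋ := Int.floor_le_floor h1
  omega

lemma floor_mul_inj {t : ℝ} (ht : 1 < t) {k k' : ℤ}
    (h : ⌊(k : ℝ) * t⌋ = ⌊(k' : ℝ) * t⌋) : k = k' := by
  rcases lt_trichotomy k k' with hlt | heq | hgt
  · exact absurd h (floor_mul_strictMono ht hlt).ne
  · exact heq
  · exact absurd h.symm (floor_mul_strictMono ht hgt).ne

lemma iterBeatty_iff {α θ : ℝ} (m : ℤ) :
    (∃ n : ℕ, 0 < n ∧ m = iterBeatty α θ n) ↔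
      ∃ k : ℤ, (∃ j > 0, beattySeq ((1 - α)/θ) j = k) ∧ m = ⌊(k : ℝ) * (1/(1 - α))⌋ := by
  constructor
  · rintro ⟨n, hn, rfl⟩
    refine ⟨⌊(n : ℝ) * (1 - α) / θ⌋, ⟨n, by exact_mod_cast hn, ?_⟩, ?_⟩
    · rw [beattySeq]; congr 1; push_cast; ring
    · rw [iterBeatty, mul_one_div]
  · rintro ⟨k, ⟨j, hj, rfl⟩, rfl⟩
    refine ⟨j.toNat, by omega, ?_⟩
    rw [iterBeatty, mul_one_div, beattySeq]
    have : ((j.toNat : ℕ) : ℝ) = (j : ℝ) := by exact_mod_cast Int.toNat_of_nonneg hj.le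
    rw [this]
    congr 2
    ring

lemma beattySeq_pos {t : ℝ} (ht : 1 < t) {j : ℤ} (hj : 0 < j) : 0 < beattySeq t j := by
  rw [beattySeq, Int.lt_iff_add_one_le, Int.le_floor]
  have : (1 : ℝ) ≤ (j : ℝ) := by exact_mod_cast hj
  push_cast
  nlinarith

theorem iterated_beatty_partition (α β γ : ℝ)
    (hirra : Irrational α) (hirrb : Irrational β) (hirrc : Irrational γ)
    (ha : 0 < α) (hb : 0 < β) (hc : 0 < γ) (hsum : α + β + γ = 1)
    (hratio : Irrational (β / γ)) :
    ∀ m : ℤ, 0 < m →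
      ((m ∈ beatty α ∧ ¬(∃ n : ℕ, 0 < n ∧ m = iterBeatty α β n) ∧
          ¬(∃ n : ℕ, 0 < n ∧ m = iterBeatty α γ n)) ∨
       (m ∉ beatty α ∧ (∃ n : ℕ, 0 < n ∧ m = iterBeatty α β n) ∧
          ¬(∃ n : ℕ, 0 < n ∧ m = iterBeatty α γ n)) ∨
       (m ∉ beatty α ∧ ¬(∃ n : ℕ, 0 < n ∧ m = iterBeatty α β n) ∧
          (∃ n : ℕ, 0 < n ∧ m = iterBeatty α γ n))) := by
  intro m hm
  have hα1 : α < 1 := by linarith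
  have hα'pos : 0 < 1 - α := by linarith
  have hα'lt : 1 - α < 1 := by linarith
  have hβlt : β < 1 - α := by linarith
  have hγlt : γ < 1 - α := by linarith
  have hrb : 1 < (1 - α) / β := (one_lt_div hb).mpr hβlt
  have hrc : 1 < (1 - α) / γ := (one_lt_div hc).mpr hγlt
  have hs1 : 1 < 1 / (1 - α) := by rw [lt_div_iff₀ hα'pos]; linarith
  -- Rayleigh 1 : 1/α and 1/(1-α)
  have hrs1 : (1/α).HolderConjugate (1/(1 - α)) := by
    rw [Real.holderConjugate_iff]
    constructor
    · rw [lt_div_iff₀ ha]; linarith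
    · rw [one_div, inv_inv, one_div, inv_inv]; ring
  have hr1 : Irrational (1/α) := by rw [one_div]; exact hirra.inv
  have h1 := hr1.beattySeq_symmDiff_beattySeq_pos hrs1
  have hm1 : m ∈ {x | ∃ k > 0, beattySeq (1/α) k = x} ∆ {x | ∃ k > 0, beattySeq (1/(1 - α)) k = x} := by
    rw [h1]; exact hm
  rw [Set.mem_symmDiff] at hm1
  -- Rayleigh 2 : (1-α)/β and (1-α)/γ
  have hrs2 : ((1 - α)/β).HolderConjugate ((1 - α)/γ) := by
    rw [Real.holderConjugate_iff]
    constructor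
    · exact hrb
    · rw [inv_div, inv_div]
      field_simp
      linarith
  have hr2 : Irrational ((1 - α)/β) := by
    have hbe : (1 - α)/β = 1 + γ/β := by field_simp; linarith
    have : Irrational (γ/β) := by
      rw [← inv_div]; exact hratio.inv
    rw [hbe]
    exact_mod_cast this.natCast_add 1
  have h2 := hr2.beattySeq_symmDiff_beattySeq_pos hrs2
  -- any iterBeatty value lies in beatty (1-α)
  have hiter_mem : ∀ θ : ℝ, 1 < (1 - α)/θ → (∃ n : ℕ, 0 < n ∧ m = iterBeatty α θ n) →
      m ∈ {x | ∃ k > 0, beattySeq (1/(1 - α)) k = x} := by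
    intro θ hθ hex
    obtain ⟨k, ⟨j, hj, hjk⟩, rfl⟩ := (iterBeatty_iff (α := α) (θ := θ) _).mp hex
    have hkpos : 0 < k := hjk ▸ beattySeq_pos hθ hj
    exact ⟨k, hkpos, by rw [beattySeq]⟩
  rcases hm1 with ⟨hA, hA'⟩ | ⟨hA', hA⟩
  · left
    refine ⟨?_, fun h => hA' (hiter_mem β hrb h), fun h => hA' (hiter_mem γ hrc h)⟩
    rw [beatty_eq_beattySeq α ha]; exact hA
  · have hnotA : m ∉ beatty α := by rw [beatty_eq_beattySeq α ha]; exact hA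
    obtain ⟨k, hk, hkm⟩ := hA'
    rw [beattySeq] at hkm
    have hm2 : k ∈ {x | ∃ j > 0, beattySeq ((1 - α)/β) j = x} ∆ {x | ∃ j > 0, beattySeq ((1 - α)/γ) j = x} := by
      rw [h2]; exact hk
    rw [Set.mem_symmDiff] at hm2
    -- uniqueness of k
    have huniq : ∀ θ : ℝ, 1 < (1 - α)/θ → (∃ n : ℕ, 0 < n ∧ m = iterBeatty α θ n) →
        k ∈ {x | ∃ j > 0, beattySeq ((1 - α)/θ) j = x} := by
      intro θ hθ hex
      obtain ⟨k', ⟨j, hj, hjk⟩, hmk'⟩ := (iterBeatty_iff (α := α) (θ := θ) _).mp hex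
      have : k = k' := floor_mul_inj hs1 (hkm.trans hmk')
      exact ⟨j, hj, by rw [hjk, ← this]⟩
    rcases hm2 with ⟨hB, hC⟩ | ⟨hC, hB⟩
    · right; left
      refine ⟨hnotA, ?_, fun h => hC (huniq γ hrc h)⟩
      rw [iterBeatty_iff]
      exact ⟨k, hB, by rw [hkm]⟩
    · right; right
      refine ⟨hnotA, fun h => hB (huniq β hrb h), ?_⟩
      rw [iterBeatty_iff]
      exact ⟨k, hC, by rw [hkm]⟩
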